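/- Let p be a real number with 1/2 < p < 1, and set γ = (1−p)/p and q = p²/(p² + (1−p)²). Define Ψ ∈ ℓ²(ℕ × Bool) by Ψ(d, false) = √(1−γ²)·γ^d·√(1−q) and Ψ(d, true) = √(1−γ²)·γ^d·√q for all d ∈ ℕ. Then Ψ is a unit vector, and Ψ lies in the topological closure of the linear span of the set consisting of the vector δ_{(0,true)} together with the vectors (δ_{(d,false)} + δ_{(d+1,true)})/√2 for all d ∈ ℕ. -/

import Mathlib

open Filter Topology ENNReal

noncomputable def vv (c γ q : ℝ) : ℕ → lp (fun _ : ℕ × Bool => ℂ) 2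
  | 0 => ((c * Real.sqrt q : ℝ) : ℂ) • lp.single 2 ((0:ℕ), true) (1:ℂ)
  | (m+1) => ((Real.sqrt 2 * (c * γ ^ m * Real.sqrt (1 - q)) : ℝ) : ℂ) •
      (((Real.sqrt 2)⁻¹ : ℂ) •
        (lp.single 2 (m, false) (1:ℂ) + lp.single 2 (m + 1, true) (1:ℂ)))

noncomputable def evCLM (x : ℕ × Bool) : lp (fun _ : ℕ × Bool => ℂ) 2 →L[ℂ] ℂ :=
  LinearMap.mkContinuous
    { toFun := fun f => f x
      map_add' := fun _ _ => rfl
      map_smul' := fun _ _ => rfl } 1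
    (fun f => by
      show ‖f x‖ ≤ 1 * ‖f‖; simpa [one_mul] using lp.norm_apply_le_norm (by norm_num : (2:ℝ≥0∞) ≠ 0) f x)

set_option maxHeartbeats 2000000 in
theorem stmt_4 (p γ q : ℝ) (hp : 1/2 < p) (hp1 : p < 1)
    (hγ : γ = (1 - p) / p) (hq : q = p ^ 2 / (p ^ 2 + (1 - p) ^ 2)) :
    ∃ Ψ : lp (fun _ : ℕ × Bool => ℂ) 2,
      (∀ d : ℕ, Ψ (d, false) =
        ((Real.sqrt (1 - γ ^ 2) * γ ^ d * Real.sqrt (1 - q) : ℝ) : ℂ)) ∧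
      (∀ d : ℕ, Ψ (d, true) =
        ((Real.sqrt (1 - γ ^ 2) * γ ^ d * Real.sqrt q : ℝ) : ℂ)) ∧
      ‖Ψ‖ = 1 ∧
      Ψ ∈ closure (↑(Submodule.span ℂ
        (({lp.single 2 ((0 : ℕ), true) (1 : ℂ)} ∪
          {v | ∃ d : ℕ, v = ((Real.sqrt 2)⁻¹ : ℂ) •
            (lp.single 2 (d, false) (1 : ℂ) + lp.single 2 (d + 1, true) (1 : ℂ))}) :
          Set (lp (fun _ : ℕ × Bool => ℂ) 2))) : Set (lp (fun _ : ℕ × Bool => ℂ) 2)) := by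
  have hp0 : 0 < p := by linarith
  have hγ0 : 0 ≤ γ := by rw [hγ]; exact div_nonneg (by linarith) hp0.le
  have hγ1 : γ < 1 := by rw [hγ, div_lt_one hp0]; linarith
  have hγ2 : γ ^ 2 < 1 := by nlinarith
  have hγ2' : 0 ≤ 1 - γ ^ 2 := by linarith
  have hD : 0 < p ^ 2 + (1 - p) ^ 2 := by nlinarith
  have hq0 : 0 ≤ q := by rw [hq]; positivity
  have hq1 : q ≤ 1 := by rw [hq, div_le_one hD]; nlinarith
  have key : 1 - q = γ ^ 2 * q := by
    rw [hγ, hq]; field_simp; ring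
  have hsqrt : Real.sqrt (1 - q) = γ * Real.sqrt q := by
    rw [key, Real.sqrt_mul (sq_nonneg γ), Real.sqrt_sq hγ0]
  set c := Real.sqrt (1 - γ ^ 2) with hc
  have hc0 : 0 ≤ c := Real.sqrt_nonneg _
  have hc2 : c ^ 2 = 1 - γ ^ 2 := Real.sq_sqrt hγ2'
  have htr : (0:ℝ) < (2 : ℝ≥0∞).toReal := by norm_num
  have hone : ‖lp.single (E := fun _ : ℕ × Bool => ℂ) 2 ((0:ℕ), true) (1:ℂ)‖ = 1 := by
    simpa using lp.norm_single (E := fun _ : ℕ × Bool => ℂ) htr (fun _ => (1:ℂ)) ((0:ℕ), true)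
  -- the series
  set v : ℕ → lp (fun _ : ℕ × Bool => ℂ) 2 := vv c γ q with hv
  have hv0 : v 0 = ((c * Real.sqrt q : ℝ) : ℂ) • lp.single 2 ((0:ℕ), true) (1:ℂ) := rfl
  have hvs : ∀ m : ℕ, v (m+1) = ((Real.sqrt 2 * (c * γ ^ m * Real.sqrt (1 - q)) : ℝ) : ℂ) •
        (((Real.sqrt 2)⁻¹ : ℂ) •
          (lp.single 2 (m, false) (1:ℂ) + lp.single 2 (m + 1, true) (1:ℂ))) := fun m => rfl
  have h2 : (0:ℝ) < Real.sqrt 2 := Real.sqrt_pos.2 (by norm_num)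
  -- pointwise values of v
  have hv0app : ∀ x : ℕ × Bool, v 0 x =
      (if x = ((0:ℕ), true) then ((c * Real.sqrt q : ℝ) : ℂ) else 0) := by
    intro x
    rw [hv0, lp.coeFn_smul, Pi.smul_apply, lp.single_apply]
    split_ifs with h <;> simp [Pi.single_apply, h]
  have hvsapp : ∀ (m : ℕ) (x : ℕ × Bool), v (m+1) x =
      (if x = (m, false) ∨ x = (m+1, true) then ((c * γ ^ m * Real.sqrt (1 - q) : ℝ) : ℂ)
        else 0) := by
    intro m x
    rw [hvs, lp.coeFn_smul, Pi.smul_apply, lp.coeFn_smul, Pi.smul_apply,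
      lp.coeFn_add, Pi.add_apply, lp.single_apply, lp.single_apply, Pi.single_apply, Pi.single_apply]
    have hne : (m, false) ≠ ((m+1 : ℕ), true) := by simp
    rcases Classical.em (x = (m, false)) with h1 | h1
    · rw [if_pos h1, if_neg (h1 ▸ hne), if_pos (Or.inl h1)]
      push_cast
      rw [add_zero]
      simp only [smul_eq_mul]; field_simp [Complex.ofReal_ne_zero.2 h2.ne']
    · rcases Classical.em (x = ((m+1 : ℕ), true)) with h2' | h2'
      · rw [if_neg h1, if_pos h2', if_pos (Or.inr h2')]
        push_cast
        rw [zero_add]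
        simp only [smul_eq_mul]; field_simp [Complex.ofReal_ne_zero.2 h2.ne']
      · rw [if_neg h1, if_neg h2', if_neg (by tauto)]
        simp
  -- summability
  have hnorm_le : ∀ m : ℕ, ‖v (m+1)‖ ≤ (2 * c * Real.sqrt (1 - q)) * γ ^ m := by
    intro m
    have hnn : 0 ≤ Real.sqrt 2 * (c * γ ^ m * Real.sqrt (1 - q)) := by
      have h3 := pow_nonneg hγ0 m
      have h4 := Real.sqrt_nonneg (1 - q)
      positivity
    rw [hvs, norm_smul, norm_smul, norm_inv]
    simp only [Complex.norm_real, Real.norm_eq_abs]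
    rw [abs_of_nonneg hnn, abs_of_nonneg h2.le]
    have hb : ‖lp.single (E := fun _ : ℕ × Bool => ℂ) 2 (m, false) (1:ℂ) +
        lp.single 2 (m + 1, true) (1:ℂ)‖ ≤ 2 := by
      refine (norm_add_le _ _).trans ?_
      have e1 : ‖lp.single (E := fun _ : ℕ × Bool => ℂ) 2 (m, false) (1:ℂ)‖ = 1 := by
        simpa using lp.norm_single (E := fun _ : ℕ × Bool => ℂ) htr (fun _ => (1:ℂ)) (m, false)
      have e2 : ‖lp.single (E := fun _ : ℕ × Bool => ℂ) 2 (m+1, true) (1:ℂ)‖ = 1 := by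
        simpa using lp.norm_single (E := fun _ : ℕ × Bool => ℂ) htr (fun _ => (1:ℂ)) (m+1, true)
      rw [e1, e2]; norm_num
    calc Real.sqrt 2 * (c * γ ^ m * Real.sqrt (1 - q)) * ((Real.sqrt 2)⁻¹ * ‖_‖)
        ≤ Real.sqrt 2 * (c * γ ^ m * Real.sqrt (1 - q)) * ((Real.sqrt 2)⁻¹ * 2) := by
          gcongr
      _ = (Real.sqrt 2 * (Real.sqrt 2)⁻¹) * (2 * c * Real.sqrt (1 - q)) * γ ^ m := by ring
      _ = (2 * c * Real.sqrt (1 - q)) * γ ^ m := by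
          rw [mul_inv_cancel₀ h2.ne']; ring
  have hsummable : Summable v := by
    refine Summable.of_norm ?_
    rw [← summable_nat_add_iff 1]
    refine Summable.of_nonneg_of_le (fun m => norm_nonneg _) (fun m => hnorm_le m) ?_
    exact (summable_geometric_of_lt_one hγ0 hγ1).mul_left _
  obtain ⟨Ψ, hΨ⟩ := hsummable
  -- evaluation
  have hx : ∀ x : ℕ × Bool, HasSum (fun n => v n x) (Ψ x) := by
    intro x
    exact hΨ.mapL (evCLM x)
  -- pointwise values of Ψ
  have hF : ∀ d : ℕ, Ψ (d, false) = ((c * γ ^ d * Real.sqrt (1 - q) : ℝ) : ℂ) := by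
    intro d
    have hsingle : HasSum (fun n => v n ((d : ℕ), false)) (v (d+1) ((d : ℕ), false)) := by
      refine hasSum_single (d+1) ?_
      intro m hm
      rcases m with _ | m
      · rw [hv0app]; simp
      · rw [hvsapp]
        rw [if_neg]
        rintro (h | h)
        · exact hm (by simpa using (congrArg (fun y : ℕ × Bool => y.1 + 1) h).symm)
        · simp at h
    have := (hx ((d : ℕ), false)).unique hsingle
    rw [this, hvsapp, if_pos (Or.inl rfl)]
  have hT : ∀ d : ℕ, Ψ (d, true) = ((c * γ ^ d * Real.sqrt q : ℝ) : ℂ) := by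
    intro d
    rcases d with _ | d
    · have hsingle : HasSum (fun n => v n ((0 : ℕ), true)) (v 0 ((0 : ℕ), true)) := by
        refine hasSum_single 0 ?_
        intro m hm
        rcases m with _ | m
        · exact absurd rfl hm
        · rw [hvsapp]; simp
      have := (hx ((0 : ℕ), true)).unique hsingle
      rw [this, hv0app, if_pos rfl]
      norm_num
    · have hsingle : HasSum (fun n => v n ((d+1 : ℕ), true)) (v (d+1) ((d+1 : ℕ), true)) := by
        refine hasSum_single (d+1) ?_
        intro m hm
        rcases m with _ | m
        · rw [hv0app]; simp
        · rw [hvsapp]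
          rw [if_neg]
          rintro (h | h)
          · simp at h
          · exact hm (by simpa using (congrArg (fun y : ℕ × Bool => y.1) h).symm)
      have := (hx ((d+1 : ℕ), true)).unique hsingle
      rw [this, hvsapp, if_pos (Or.inr rfl)]
      rw [hsqrt]
      push_cast
      ring
  -- norm of Ψ
  have habs : ∀ x : ℝ, ‖(x : ℂ)‖ ^ (2:ℝ) = x ^ 2 := by
    intro x
    rw [Complex.norm_real, Real.norm_eq_abs, Real.rpow_two, sq_abs]
  have ht2 : (2:ℝ≥0∞).toReal = (2:ℝ) := by norm_num
  have hsumm2 : Summable fun x : ℕ × Bool => ‖Ψ x‖ ^ (2:ℝ) := by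
    have h := Memℓp.summable htr (lp.memℓp Ψ)
    rw [ht2] at h
    exact h
  have hnorm : ‖Ψ‖ = 1 := by
    have h1 : ‖Ψ‖ ^ (2:ℝ) = ∑' x : ℕ × Bool, ‖Ψ x‖ ^ (2:ℝ) := by
      have h := lp.norm_rpow_eq_tsum (p := 2) htr Ψ
      rw [ht2] at h
      exact h
    have h2' : ∑' x : ℕ × Bool, ‖Ψ x‖ ^ (2:ℝ) = ∑' d : ℕ, ∑' b : Bool, ‖Ψ (d, b)‖ ^ (2:ℝ) :=
      Summable.tsum_prod' hsumm2 (fun d => Summable.of_finite)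
    have h3 : ∀ d : ℕ, ∑' b : Bool, ‖Ψ (d, b)‖ ^ (2:ℝ) = (1 - γ ^ 2) * (γ ^ 2) ^ d := by
      intro d
      rw [tsum_bool, hF d, hT d, habs, habs]
      have e1 : Real.sqrt (1 - q) ^ 2 = 1 - q := Real.sq_sqrt (by linarith)
      have e2 : Real.sqrt q ^ 2 = q := Real.sq_sqrt hq0
      rw [mul_pow, mul_pow, mul_pow, mul_pow, e1, e2, hc2, ← pow_mul, ← pow_mul,
        mul_comm d 2, pow_mul]
      ring
    have h4 : ∑' d : ℕ, (1 - γ ^ 2) * (γ ^ 2) ^ d = 1 := by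
      rw [tsum_mul_left, tsum_geometric_of_lt_one (sq_nonneg γ) hγ2,
        mul_inv_cancel₀ (by linarith : (1:ℝ) - γ ^ 2 ≠ 0)]
    have h5 : ‖Ψ‖ ^ (2:ℝ) = 1 := by
      rw [h1, h2']
      rw [tsum_congr h3, h4]
    rw [Real.rpow_two] at h5
    have h6 : (‖Ψ‖ - 1) * (‖Ψ‖ + 1) = 0 := by ring_nf; nlinarith [h5]
    rcases mul_eq_zero.1 h6 with h | h
    · linarith
    · have := norm_nonneg Ψ; linarith
  refine ⟨Ψ, ?_, ?_, hnorm, ?_⟩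
  · intro d; rw [hF d, hc]
  · intro d; rw [hT d, hc]
  · refine mem_closure_of_tendsto hΨ (Filter.Eventually.of_forall fun s => ?_)
    refine SetLike.mem_coe.mpr (Submodule.sum_mem _ fun n _ => ?_)
    rcases n with _ | m
    · rw [hv0]
      exact Submodule.smul_mem _ _ (Submodule.subset_span (Set.mem_union_left _ rfl))
    · rw [hvs]
      exact Submodule.smul_mem _ _ (Submodule.subset_span (Set.mem_union_right _ ⟨m, rfl⟩))
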